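/- The function f(z) = e^z / z satisfies |z f'(z)/f(z) + 1| < 1 for all z in the punctured unit disc E (so f ∈ MF), but f does not satisfy Re(z f(z)) > |z² f'(z) + z f(z)| for all z ∈ E (so f ∉ ME(1)). -/

import Mathlib

open Complex

theorem stmt2 (f : ℂ → ℂ) (hf : ∀ z : ℂ, f z = Complex.exp z / z) :
    (∀ z : ℂ, 0 < ‖z‖ → ‖z‖ < 1 →
      ‖z * deriv f z / f z + 1‖ < 1) ∧
    ¬ (∀ z : ℂ, 0 < ‖z‖ → ‖z‖ < 1 →
      (z * f z).re > ‖z ^ 2 * deriv f z + z * f z‖) := by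
  have hfe : f = fun z => Complex.exp z / z := funext hf
  subst hfe
  have hderiv : ∀ z : ℂ, z ≠ 0 →
      deriv (fun z => Complex.exp z / z) z = (Complex.exp z * z - Complex.exp z) / z ^ 2 := by
    intro z hz
    have h : HasDerivAt (fun z => Complex.exp z / z)
        ((Complex.exp z * z - Complex.exp z * 1) / z ^ 2) z :=
      (Complex.hasDerivAt_exp z).div (hasDerivAt_id z) hz
    simpa using h.deriv
  constructor
  · intro z h0 h1
    have hz : z ≠ 0 := by
      intro h; rw [h] at h0; simp at h0
    have hez : Complex.exp z ≠ 0 := Complex.exp_ne_zero z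
    have : z * deriv (fun z => Complex.exp z / z) z / (Complex.exp z / z) + 1 = z := by
      rw [hderiv z hz]
      field_simp
      ring
    rw [this]
    exact h1
  · intro h
    set z : ℂ := (99 / 100 : ℝ) * I with hzdef
    have hz : z ≠ 0 := by
      simp [hzdef, Complex.ext_iff]
    have habs : ‖z‖ = 99 / 100 := by
      simp [hzdef, Complex.norm_def, Complex.normSq_apply]
    have h0 : (0 : ℝ) < ‖z‖ := by rw [habs]; norm_num
    have h1 : ‖z‖ < 1 := by rw [habs]; norm_num
    have key := h z h0 h1
    -- compute z * f z = exp z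
    have hzf : z * (Complex.exp z / z) = Complex.exp z := by
      field_simp
    have hre : (Complex.exp z).re = Real.cos (99 / 100) := by
      rw [hzdef]
      exact Complex.exp_ofReal_mul_I_re _
    -- compute z^2 * deriv + z*f = z * exp z
    have hsum : z ^ 2 * deriv (fun z => Complex.exp z / z) z + z * (Complex.exp z / z)
        = z * Complex.exp z := by
      rw [hderiv z hz]
      field_simp
      ring
    have habse : ‖Complex.exp z‖ = 1 := by
      rw [Complex.norm_exp]
      simp [hzdef]
    rw [hsum, hzf, hre, norm_mul, habs, habse] at key
    have hcos : Real.cos (99 / 100) ≤ 1 - 2 / Real.pi ^ 2 * (99 / 100) ^ 2 := by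
      apply Real.cos_le_one_sub_mul_cos_sq
      rw [_root_.abs_of_nonneg (by norm_num : (0:ℝ) ≤ 99/100)]
      linarith [Real.pi_gt_three]
    have hpi : Real.pi ≤ 4 := Real.pi_le_four
    have hpi2 : Real.pi ^ 2 ≤ 16 := by nlinarith [Real.pi_pos]
    have hd : (2:ℝ) / 16 ≤ 2 / Real.pi ^ 2 :=
      div_le_div_of_nonneg_left (by norm_num) (by positivity) hpi2
    nlinarith
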